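/- Let K be a compact Hausdorff space and D ⊆ K a dense countably compact subset such that D is countably closed in K and every bounded continuous real function on D extends continuously to K (i.e., K = βD). If D has a full retractional skeleton {r_s}_{s∈Γ}, then the continuous extensions R_s : K → K of the r_s form a retractional skeleton in K whose induced set equals D. -/

import Mathlib

open Filter

/-- A subset is countably compact: every countable open cover has a finite
subcover. -/
def IsCountablyCompactSet {X : Type*} [TopologicalSpace X] (S : Set X) : Prop :=
  ∀ U : ℕ → Set X, (∀ n, IsOpen (U n)) → S ⊆ ⋃ n, U n →
    ∃ t : Finset ℕ, S ⊆ ⋃ n ∈ t, U n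

/-- A retractional skeleton in a topological space `K`. -/
structure RetractionalSkeleton (K : Type*) [TopologicalSpace K]
    (Γ : Type*) [PartialOrder Γ] [IsDirected Γ (· ≤ ·)] [Nonempty Γ] where
  r : Γ → K → K
  continuous_r : ∀ s, Continuous (r s)
  retraction : ∀ s, r s ∘ r s = r s
  compact_range : ∀ s, IsCompact (Set.range (r s))
  metrizable_range : ∀ s, TopologicalSpace.MetrizableSpace (Set.range (r s))
  comm₁ : ∀ s t, s ≤ t → r s ∘ r t = r s
  comm₂ : ∀ s t, s ≤ t → r t ∘ r s = r s
  sup_seq : ∀ u : ℕ → Γ, StrictMono u →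
    ∃ t : Γ, IsLUB (Set.range u) t ∧
      ∀ x, Tendsto (fun n => r (u n) x) atTop (nhds (r t x))
  tendsto : ∀ x, Tendsto (fun s => r s x) atTop (nhds x)

theorem extensions_of_full_skeleton_form_skeleton_inducing_D
    {K : Type*} [TopologicalSpace K] [CompactSpace K] [T2Space K]
    (D : Set K) (hdense : Dense D) (hcc : IsCountablyCompactSet D)
    (hcclosed : ∀ C : Set K, C ⊆ D → C.Countable → closure C ⊆ D)
    (hβ : ∀ f : D → ℝ, Continuous f → (∃ C : ℝ, ∀ x, |f x| ≤ C) →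
      ∃ g : K → ℝ, Continuous g ∧ ∀ x : D, g x = f x)
    {Γ : Type*} [PartialOrder Γ] [IsDirected Γ (· ≤ ·)] [Nonempty Γ]
    (sk : RetractionalSkeleton (↥D) Γ)
    (hfull : (⋃ s, Set.range (sk.r s)) = (Set.univ : Set (↥D)))
    (R : Γ → K → K) (hRcont : ∀ s, Continuous (R s))
    (hRext : ∀ (s : Γ) (x : D), R s x = (sk.r s x : K)) :
    ∃ sk' : RetractionalSkeleton K Γ, (∀ s, sk'.r s = R s) ∧
      (⋃ s, Set.range (R s)) = D := by
  classical
  -- Extension principle: continuous maps agreeing on `D` agree.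
  have hext : ∀ f h : K → K, Continuous f → Continuous h →
      (∀ d : ↥D, f d = h d) → f = h := by
    intro f h hf hh he
    exact hf.ext_on hdense hh (fun z hz => he ⟨z, hz⟩)
  -- Range identification
  have hrange : ∀ s, Set.range (R s) = Subtype.val '' Set.range (sk.r s) := by
    intro s
    apply Set.Subset.antisymm
    · have hM : IsCompact (Subtype.val '' Set.range (sk.r s)) :=
        (sk.compact_range s).image continuous_subtype_val
      have hMc : IsClosed (Subtype.val '' Set.range (sk.r s)) := hM.isClosed
      have h1 : Set.range (R s) = R s '' closure D := by
        rw [hdense.closure_eq, Set.image_univ]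
      rw [h1]
      refine (image_closure_subset_closure_image (hRcont s)).trans ?_
      rw [← hMc.closure_eq]
      apply closure_mono
      rintro _ ⟨z, hz, rfl⟩
      exact ⟨sk.r s ⟨z, hz⟩, ⟨⟨z, hz⟩, rfl⟩, (hRext s ⟨z, hz⟩).symm⟩
    · rintro _ ⟨_, ⟨w, rfl⟩, rfl⟩
      exact ⟨w, hRext s w⟩
  have hsubD : ∀ s (z : K), R s z ∈ D := by
    intro s z
    have : R s z ∈ Set.range (R s) := Set.mem_range_self z
    rw [hrange] at this
    obtain ⟨w, _, hw⟩ := this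
    exact hw ▸ w.2
  -- commutation, extended
  have hcomm₁ : ∀ s t, s ≤ t → R s ∘ R t = R s := by
    intro s t hst
    refine hext _ _ ((hRcont s).comp (hRcont t)) (hRcont s) ?_
    intro d
    show R s (R t d) = R s d
    rw [hRext t d, hRext s (sk.r t d), hRext s d]
    exact congrArg _ (congrFun (sk.comm₁ s t hst) d)
  have hretr : ∀ s, R s ∘ R s = R s := by
    intro s
    refine hext _ _ ((hRcont s).comp (hRcont s)) (hRcont s) ?_
    intro d
    show R s (R s d) = R s d
    rw [hRext s d, hRext s (sk.r s d)]
    exact congrArg _ (congrFun (sk.retraction s) d)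
  have hcomm₂ : ∀ s t, s ≤ t → R t ∘ R s = R s := by
    intro s t hst
    refine hext _ _ ((hRcont t).comp (hRcont s)) (hRcont s) ?_
    intro d
    show R t (R s d) = R s d
    rw [hRext s d, hRext t (sk.r s d)]
    exact congrArg _ (congrFun (sk.comm₂ s t hst) d)
  -- fullness: each point of D is eventually fixed
  have hφ' : ∀ d : ↥D, ∃ s : Γ, ∀ t, s ≤ t → sk.r t d = d := by
    intro d
    have hd : d ∈ ⋃ s, Set.range (sk.r s) := by rw [hfull]; trivial
    obtain ⟨_, ⟨s, rfl⟩, w, hw⟩ := hd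
    refine ⟨s, fun t hst => ?_⟩
    rw [← hw]
    exact congrFun (sk.comm₂ s t hst) w
  set φ : ↥D → Γ := fun d => (hφ' d).choose with hφdef
  have hφ : ∀ (d : ↥D) t, φ d ≤ t → sk.r t d = d := fun d => (hφ' d).choose_spec
  -- sup_seq, extended
  have hsup : ∀ u : ℕ → Γ, StrictMono u →
      ∃ t : Γ, IsLUB (Set.range u) t ∧
        ∀ x, Tendsto (fun n => R (u n) x) atTop (nhds (R t x)) := by
    intro u hu
    obtain ⟨t, hlub, hconv⟩ := sk.sup_seq u hu
    refine ⟨t, hlub, fun x => ?_⟩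
    have hle : ∀ n, u n ≤ t := fun n => hlub.1 ⟨n, rfl⟩
    have hRt : R t x ∈ Subtype.val '' Set.range (sk.r t) := by
      rw [← hrange]; exact Set.mem_range_self x
    obtain ⟨w, hw, hwx⟩ := hRt
    have hfix : sk.r t w = w := by
      obtain ⟨v, rfl⟩ := hw; exact congrFun (sk.retraction t) v
    have heq : ∀ n, R (u n) x = (sk.r (u n) w : K) := by
      intro n
      have h1 : R (u n) (R t x) = R (u n) x := congrFun (hcomm₁ (u n) t (hle n)) x
      rw [← h1, ← hwx, hRext]
    have h2 : Tendsto (fun n => ((sk.r (u n) w : K))) atTop (nhds ((sk.r t w : K))) :=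
      (continuous_subtype_val.tendsto _).comp (hconv w)
    rw [hfix, hwx] at h2
    exact h2.congr (fun n => (heq n).symm)
  -- metrizability of ranges
  have hmetr : ∀ s, TopologicalSpace.MetrizableSpace ↥(Set.range (R s)) := by
    intro s
    haveI : CompactSpace ↥(Set.range (sk.r s)) :=
      isCompact_iff_compactSpace.mp (sk.compact_range s)
    haveI := sk.metrizable_range s
    have hinj : Function.Injective (Subtype.val : ↥D → K) := Subtype.val_injective
    let e : ↥(Set.range (sk.r s)) ≃ ↥(Subtype.val '' Set.range (sk.r s)) :=
      Equiv.Set.image _ _ hinj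
    have hec : Continuous e := by
      apply Continuous.subtype_mk
      exact continuous_subtype_val.comp continuous_subtype_val
    have h := hec.homeoOfEquivCompactToT2 (f := e)
    have hme : TopologicalSpace.MetrizableSpace ↥(Subtype.val '' Set.range (sk.r s)) :=
      h.symm.isEmbedding.metrizableSpace
    rw [hrange s]
    exact hme
  -- the induced set
  have hind : (⋃ s, Set.range (R s)) = D := by
    have : (⋃ s, Set.range (R s)) = Subtype.val '' ⋃ s, Set.range (sk.r s) := by
      rw [Set.image_iUnion]
      exact Set.iUnion_congr hrange
    rw [this, hfull, Set.image_univ, Subtype.range_val]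
  -- THE MAIN POINT: convergence of the net R s x to x
  have htendsto : ∀ x : K, Tendsto (fun s => R s x) atTop (nhds x) := by
    by_cases hmax : ∃ m : Γ, ∀ b, ¬ m < b
    · -- `Γ` has a maximal (hence greatest) element `m`; then `R m = id`.
      obtain ⟨m, hm⟩ := hmax
      have hmtop : ∀ a : Γ, a ≤ m := by
        intro a
        obtain ⟨c, hac, hmc⟩ := exists_ge_ge a m
        have hcm : c = m := by
          by_contra hne
          exact hm c (lt_of_le_of_ne hmc (Ne.symm hne))
        exact hcm ▸ hac
      have hRm : ∀ z, R m z = z := by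
        have hid : R m = id := by
          refine hext _ _ (hRcont m) continuous_id ?_
          intro d
          have h1 : sk.r m d = d := by
            have h2 := sk.tendsto d
            have hpure : pure (sk.r m d) ≤ nhds d := by
              refine Filter.le_def.mpr fun N hN => ?_
              rw [Filter.mem_pure]
              obtain ⟨a, ha⟩ := mem_atTop_sets.mp (Filter.mem_map.mp (h2 hN))
              exact ha m (hmtop a)
            exact pure_le_nhds_iff.mp hpure
          show R m ↑d = ↑d
          rw [hRext m d, h1]
        intro z; rw [hid]; rfl
      intro x
      have hev : ∀ᶠ s in (atTop : Filter Γ), R s x = x := by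
        refine mem_atTop_sets.mpr ⟨m, fun b hb => ?_⟩
        have hbm : b = m := le_antisymm (hmtop b) hb
        show R b x = x
        rw [hbm, hRm]
      exact tendsto_const_nhds.congr' (by filter_upwards [hev] with s hs using hs.symm)
    · push_neg at hmax
      intro x
      by_contra hnot
      -- extract a cluster point `y ≠ x` of the net `s ↦ R s x`
      obtain ⟨U, hU, hUfr⟩ : ∃ U ∈ nhds x, ∃ᶠ s in (atTop : Filter Γ), R s x ∈ Uᶜ := by
        rw [Filter.tendsto_def] at hnot
        push_neg at hnot
        obtain ⟨U, hU, hUn⟩ := hnot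
        refine ⟨U, hU, ?_⟩
        rw [mem_atTop_sets] at hUn
        push_neg at hUn
        refine frequently_atTop.mpr fun a => ?_
        obtain ⟨b, hb, hbn⟩ := hUn a
        exact ⟨b, hb, hbn⟩
      have hneBot : NeBot (map (fun s => R s x) atTop ⊓ 𝓟 Uᶜ) :=
        Filter.frequently_mem_iff_neBot.mp (Filter.frequently_map.mpr hUfr)
      obtain ⟨y, hy⟩ := @exists_clusterPt_of_compactSpace K _ _
        (map (fun s => R s x) atTop ⊓ 𝓟 Uᶜ) hneBot
      have hyc : MapClusterPt y atTop (fun s => R s x) := hy.mono inf_le_left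
      have hyU : y ∈ closure Uᶜ := mem_closure_iff_clusterPt.mpr (hy.mono inf_le_right)
      have hyx : y ≠ x := by
        rintro rfl
        obtain ⟨V, hVU, hVo, hxV⟩ := mem_nhds_iff.mp hU
        have hcl : closure Uᶜ ⊆ Vᶜ := by
          rw [← hVo.isClosed_compl.closure_eq]
          exact closure_mono (Set.compl_subset_compl.mpr hVU)
        exact hcl hyU hxV
      -- a Urysohn function separating `y` from `x`
      obtain ⟨g, hg0, hg1, hg01⟩ := exists_continuous_zero_one_of_isClosed
        (isClosed_singleton (x := y)) (isClosed_singleton (x := x))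
        (Set.disjoint_singleton_left.mpr (by simpa using hyx))
      have hgy : g y = 0 := hg0 rfl
      have hgx : g x = 1 := hg1 rfl
      have hfreq : ∀ a : Γ, ∃ s, a ≤ s ∧ g (R s x) < 1/3 := by
        have hN : (⇑g) ⁻¹' Set.Iio (1/3) ∈ nhds y :=
          g.continuous.continuousAt.preimage_mem_nhds
            (Iio_mem_nhds (show g y < 1/3 by rw [hgy]; norm_num))
        have hfr := mapClusterPt_iff_frequently.mp hyc _ hN
        intro a
        obtain ⟨b, hb, hPb⟩ := frequently_atTop.mp hfr a
        exact ⟨b, hb, hPb⟩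
      -- the recursive construction
      set G : Γ → Set K := fun s => (fun z => g (R s z)) ⁻¹' Set.Iio (1/3) with hGdef
      have hGopen : ∀ s, IsOpen (G s) := fun s =>
        isOpen_Iio.preimage (g.continuous.comp (hRcont s))
      set Inv : Γ × ↥D × Set K → Prop := fun p =>
        IsOpen p.2.2 ∧ x ∈ p.2.2 ∧ (p.2.1 : K) ∈ p.2.2 ∧ 2/3 < g (p.2.1 : K) ∧
          φ p.2.1 ≤ p.1 ∧ g (R p.1 x) < 1/3 with hInvdef
      set Step : Γ × ↥D × Set K → Γ × ↥D × Set K → Prop := fun p q =>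
        p.1 < q.1 ∧ q.2.2 = p.2.2 ∩ G p.1 with hStepdef
      have hinit : ∃ p, Inv p := by
        have hO : IsOpen ((⇑g) ⁻¹' Set.Ioi (2/3)) := isOpen_Ioi.preimage g.continuous
        have hxO : x ∈ (⇑g) ⁻¹' Set.Ioi (2/3) := by
          simp only [Set.mem_preimage, Set.mem_Ioi, hgx]; norm_num
        obtain ⟨d0, hd0D, hd0O⟩ := hdense.exists_mem_open hO ⟨x, hxO⟩
        obtain ⟨s0, hs0ge, hs0lt⟩ := hfreq (φ ⟨d0, hd0D⟩)
        exact ⟨(s0, ⟨d0, hd0D⟩, Set.univ),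
          isOpen_univ, trivial, trivial, hd0O, hs0ge, hs0lt⟩
      have hkey : ∀ p, Inv p → ∃ q, Inv q ∧ Step p q := by
        rintro ⟨s, d, W⟩ ⟨hWo, hxW, hdW, hgd, hφd, hgs⟩
        have hW'o : IsOpen (W ∩ G s) := hWo.inter (hGopen s)
        have hxW' : x ∈ W ∩ G s := ⟨hxW, hgs⟩
        have hO : IsOpen ((W ∩ G s) ∩ (⇑g) ⁻¹' Set.Ioi (2/3)) :=
          hW'o.inter (isOpen_Ioi.preimage g.continuous)
        have hxO : x ∈ (W ∩ G s) ∩ (⇑g) ⁻¹' Set.Ioi (2/3) :=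
          ⟨hxW', by simp only [Set.mem_preimage, Set.mem_Ioi, hgx]; norm_num⟩
        obtain ⟨d', hd'D, hd'O⟩ := hdense.exists_mem_open hO ⟨x, hxO⟩
        obtain ⟨u, hsu, hφu⟩ := exists_ge_ge s (φ ⟨d', hd'D⟩)
        obtain ⟨u', huu'⟩ := hmax u
        obtain ⟨s', hs'ge, hs'lt⟩ := hfreq u'
        refine ⟨(s', ⟨d', hd'D⟩, W ∩ G s),
          ⟨hW'o, hxW', hd'O.1, hd'O.2, ?_, hs'lt⟩, ?_, rfl⟩
        · exact le_trans hφu (le_trans huu'.le hs'ge)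
        · exact lt_of_le_of_lt hsu (lt_of_lt_of_le huu' hs'ge)
      obtain ⟨p0, hp0⟩ := hinit
      let Next : {p : Γ × ↥D × Set K // Inv p} → {p : Γ × ↥D × Set K // Inv p} :=
        fun p => ⟨(hkey p.1 p.2).choose, (hkey p.1 p.2).choose_spec.1⟩
      let c : ℕ → {p : Γ × ↥D × Set K // Inv p} := fun n => Next^[n] ⟨p0, hp0⟩
      have hcsucc : ∀ n, c (n+1) = Next (c n) := fun n =>
        Function.iterate_succ_apply' Next n _
      have hInv : ∀ n, Inv (c n).1 := fun n => (c n).2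
      have hStep : ∀ n, Step (c n).1 (c (n+1)).1 := by
        intro n
        rw [hcsucc n]
        exact (hkey (c n).1 (c n).2).choose_spec.2
      set σ : ℕ → Γ := fun n => (c n).1.1 with hσdef
      set δ : ℕ → ↥D := fun n => (c n).1.2.1 with hδdef
      set Wn : ℕ → Set K := fun n => (c n).1.2.2 with hWndef
      have hσmono : StrictMono σ := strictMono_nat_of_lt_succ fun n => (hStep n).1
      have hWanti : Antitone Wn := antitone_nat_of_succ_le fun n => by
        rw [show Wn (n+1) = Wn n ∩ G (σ n) from (hStep n).2]
        exact Set.inter_subset_left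
      have hcross : ∀ m n, m < n → g (R (σ m) (δ n : K)) < 1/3 := by
        intro m n hmn
        have h1 : (δ n : K) ∈ Wn n := (hInv n).2.2.1
        have h2 : Wn n ⊆ Wn (m+1) := hWanti (Nat.succ_le_of_lt hmn)
        have h3 : Wn (m+1) ⊆ G (σ m) := by
          rw [show Wn (m+1) = Wn m ∩ G (σ m) from (hStep m).2]
          exact Set.inter_subset_right
        exact h3 (h2 h1)
      obtain ⟨t, hlubt, hconvt⟩ := sk.sup_seq σ hσmono
      have hσle : ∀ n, σ n ≤ t := fun n => hlubt.1 ⟨n, rfl⟩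
      have hfixt : ∀ n, sk.r t (δ n) = δ n := fun n =>
        hφ (δ n) t (le_trans (hInv n).2.2.2.2.1 (hσle n))
      haveI : CompactSpace ↥(Set.range (sk.r t)) :=
        isCompact_iff_compactSpace.mp (sk.compact_range t)
      haveI := sk.metrizable_range t
      obtain ⟨l, ψ, hψmono, hψconv⟩ := SeqCompactSpace.tendsto_subseq
        (fun n => (⟨δ n, δ n, hfixt n⟩ : ↥(Set.range (sk.r t))))
      set dl : ↥D := (l : ↥D) with hdldef
      have hψconvD : Tendsto (fun k => (δ (ψ k) : K)) atTop (nhds (dl : K)) := by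
        have h2 := (continuous_subtype_val.tendsto l).comp hψconv
        exact (continuous_subtype_val.tendsto (l : ↥D)).comp h2
      have hA : (2:ℝ)/3 ≤ g (dl : K) := by
        have h1 : Tendsto (fun k => g (δ (ψ k) : K)) atTop (nhds (g (dl : K))) :=
          (g.continuous.tendsto _).comp hψconvD
        refine ge_of_tendsto h1 ?_
        filter_upwards with k using (hInv (ψ k)).2.2.2.1.le
      have hB : ∀ m, g (R (σ m) (dl : K)) ≤ 1/3 := by
        intro m
        have h1 : Tendsto (fun k => g (R (σ m) (δ (ψ k) : K))) atTop
            (nhds (g (R (σ m) (dl : K)))) :=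
          ((g.continuous.comp (hRcont (σ m))).tendsto _).comp hψconvD
        refine le_of_tendsto h1 ?_
        rw [eventually_atTop]
        refine ⟨m+1, fun k hk => ?_⟩
        exact (hcross m (ψ k)
          (lt_of_lt_of_le (Nat.lt_of_succ_le hk) hψmono.le_apply)).le
      have hC : Tendsto (fun m => g (R (σ m) (dl : K))) atTop (nhds (g (dl : K))) := by
        have h1 := hconvt dl
        have hfix : sk.r t dl = dl := by
          obtain ⟨v, hv⟩ := l.2
          rw [hdldef, ← hv]
          exact congrFun (sk.retraction t) v
        rw [hfix] at h1
        have h2 : Tendsto (fun m => ((sk.r (σ m) dl : K))) atTop (nhds (dl : K)) :=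
          (continuous_subtype_val.tendsto _).comp h1
        have h3 := (g.continuous.tendsto _).comp h2
        exact h3.congr fun m => (congrArg g (hRext (σ m) dl)).symm
      have hcontra : (2:ℝ)/3 ≤ 1/3 :=
        le_trans hA (le_of_tendsto hC (by filter_upwards with m using hB m))
      norm_num at hcontra
  exact ⟨{ r := R, continuous_r := hRcont, retraction := hretr,
           compact_range := fun s => (hrange s) ▸ ((sk.compact_range s).image continuous_subtype_val),
           metrizable_range := hmetr, comm₁ := hcomm₁, comm₂ := hcomm₂,
           sup_seq := hsup, tendsto := htendsto }, fun s => rfl, hind⟩
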